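/- Let e : ℝᵐ → ℝ be convex and differentiable, φ = (1/(p+1))‖·‖^{p+1} with dual norm ‖·‖_*, λ > 0, p ≥ 1, and suppose ∇e(y^k) = ∇φ(λ^{−1}(y^k − P(y^k))) for some point P(y^k). Then for all y ∈ ℝᵐ: e(y^k) ≤ e(y) + λ^{−p}φ(y^k − P(y^k)) + p^p · λ^{−p}φ(y − y^k). -/

import Mathlib

open Real

private lemma young_aux {p A D : ℝ} (hp : 1 ≤ p) (hA : 0 ≤ A) (hD : 0 ≤ D) :
    A ^ p * D ≤ (1 / (p + 1)) * A ^ (p + 1) + p ^ p * ((1 / (p + 1)) * D ^ (p + 1)) := by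
  have hp0 : (0:ℝ) < p := lt_of_lt_of_le one_pos hp
  have hp1 : (0:ℝ) < p + 1 := by linarith
  set σ : ℝ := p ^ (p / (p + 1)) with hσdef
  have hσ : 0 < σ := Real.rpow_pos_of_pos hp0 _
  have hconj : ((p + 1) / p).HolderConjugate (p + 1) := by
    rw [Real.holderConjugate_iff]
    constructor
    · rw [lt_div_iff₀ hp0]; linarith
    · field_simp
  have hy := Real.young_inequality_of_nonneg
    (div_nonneg (Real.rpow_nonneg hA p) hσ.le) (mul_nonneg hσ.le hD) hconj
  have h1 : A ^ p / σ * (σ * D) = A ^ p * D := by field_simp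
  have h2 : (A ^ p / σ) ^ ((p + 1) / p) = A ^ (p + 1) / p := by
    rw [Real.div_rpow (Real.rpow_nonneg hA p) hσ.le, ← Real.rpow_mul hA]
    have e1 : p * ((p + 1) / p) = p + 1 := by field_simp
    have e2 : σ ^ ((p + 1) / p) = p := by
      rw [hσdef, ← Real.rpow_mul hp0.le]
      have : p / (p + 1) * ((p + 1) / p) = 1 := by field_simp
      rw [this, Real.rpow_one]
    rw [e1, e2]
  have h3 : (σ * D) ^ (p + 1) = p ^ p * D ^ (p + 1) := by
    rw [Real.mul_rpow hσ.le hD, hσdef, ← Real.rpow_mul hp0.le]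
    have : p / (p + 1) * (p + 1) = p := by field_simp
    rw [this]
  rw [h1, h2, h3] at hy
  calc A ^ p * D ≤ A ^ (p + 1) / p / ((p + 1) / p) + p ^ p * D ^ (p + 1) / (p + 1) := hy
    _ = (1 / (p + 1)) * A ^ (p + 1) + p ^ p * ((1 / (p + 1)) * D ^ (p + 1)) := by
        field_simp

/-- If `e` is convex and differentiable with
`∇e(y^k) = ∇φ(λ^{−1}(y^k − P(y^k)))` where `φ = (1/(p+1))‖·‖^{p+1}`
(Euclidean, self-dual norm), then for all `y`:
`e(y^k) ≤ e(y) + λ^{−p}φ(y^k − P(y^k)) + p^p λ^{−p}φ(y − y^k)`. -/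
theorem stmt9 (m : ℕ) (e : EuclideanSpace ℝ (Fin m) → ℝ)
    (hconv : ConvexOn ℝ Set.univ e)
    (lam p : ℝ) (hlam : 0 < lam) (hp : 1 ≤ p)
    (yk Pyk : EuclideanSpace ℝ (Fin m))
    (hgrad : HasGradientAt e
      ((‖(lam⁻¹ : ℝ) • (yk - Pyk)‖ ^ (p - 1) : ℝ) • ((lam⁻¹ : ℝ) • (yk - Pyk))) yk) :
    ∀ y, e yk ≤ e y
        + lam ^ (-p) * ((1 / (p + 1)) * ‖yk - Pyk‖ ^ (p + 1))
        + p ^ p * (lam ^ (-p) * ((1 / (p + 1)) * ‖y - yk‖ ^ (p + 1))) := by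
  intro y
  have hp0 : (0:ℝ) < p := lt_of_lt_of_le one_pos hp
  set z : EuclideanSpace ℝ (Fin m) := (lam⁻¹ : ℝ) • (yk - Pyk) with hz
  set g : EuclideanSpace ℝ (Fin m) := (‖z‖ ^ (p - 1) : ℝ) • z with hg
  set d : EuclideanSpace ℝ (Fin m) := y - yk with hd
  -- convexity first-order inequality
  have key : (inner ℝ g d : ℝ) ≤ e y - e yk := by
    set f : ℝ → ℝ := fun t => e (yk + t • d) with hf
    have hconvf : ConvexOn ℝ Set.univ f := by
      have := hconv.comp_affineMap (AffineMap.lineMap yk (yk + d))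
      simpa [Function.comp_def, AffineMap.lineMap_apply, f, add_comm] using this
    have hline : HasDerivAt (fun t : ℝ => yk + t • d) d 0 := by
      simpa using ((hasDerivAt_id (0:ℝ)).smul_const d).const_add yk
    have h00 : yk + (0:ℝ) • d = yk := by simp
    have hgrad' : HasFDerivAt e ((InnerProductSpace.toDual ℝ _) g) (yk + (0:ℝ) • d) := by
      rw [h00]; exact hgrad.hasFDerivAt
    have hderiv : HasDerivAt f (inner ℝ g d : ℝ) 0 := by
      have := hgrad'.comp_hasDerivAt (0:ℝ) hline
      exact this
    have := hconvf.le_slope_of_hasDerivAt (Set.mem_univ 0) (Set.mem_univ 1)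
      zero_lt_one hderiv
    have hyd : yk + d = y := by rw [hd]; abel
    simpa [slope_def_field, f, hyd] using this
  have habs : -(inner ℝ g d : ℝ) ≤ ‖g‖ * ‖d‖ := by
    have := abs_real_inner_le_norm g d
    have h2 := neg_abs_le (inner ℝ g d : ℝ)
    linarith [neg_le_neg h2]
  have hstep1 : e yk ≤ e y + ‖g‖ * ‖d‖ := by linarith
  -- compute ‖g‖
  have hnormg : ‖g‖ = ‖z‖ ^ p := by
    rw [hg, norm_smul, Real.norm_eq_abs, abs_of_nonneg (Real.rpow_nonneg (norm_nonneg z) _)]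
    rcases eq_or_ne ‖z‖ 0 with h0 | h0
    · rw [h0, mul_zero, Real.zero_rpow hp0.ne']
    · rw [← Real.rpow_add_one h0]; ring_nf
  have hnormz : ‖z‖ = lam⁻¹ * ‖yk - Pyk‖ := by
    rw [hz, norm_smul, Real.norm_eq_abs, abs_of_pos (inv_pos.2 hlam)]
  have hgd : ‖g‖ * ‖d‖ = lam ^ (-p) * (‖yk - Pyk‖ ^ p * ‖d‖) := by
    rw [hnormg, hnormz, Real.mul_rpow (inv_pos.2 hlam).le (norm_nonneg _),
      ← Real.rpow_neg_one lam, ← Real.rpow_mul hlam.le]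
    ring_nf
  have hyoung := young_aux hp (norm_nonneg (yk - Pyk)) (norm_nonneg d)
  have hlampow : (0:ℝ) < lam ^ (-p) := Real.rpow_pos_of_pos hlam _
  have := mul_le_mul_of_nonneg_left hyoung hlampow.le
  calc e yk ≤ e y + ‖g‖ * ‖d‖ := hstep1
    _ = e y + lam ^ (-p) * (‖yk - Pyk‖ ^ p * ‖d‖) := by rw [hgd]
    _ ≤ e y + lam ^ (-p) * ((1 / (p + 1)) * ‖yk - Pyk‖ ^ (p + 1)
          + p ^ p * ((1 / (p + 1)) * ‖d‖ ^ (p + 1))) := by linarith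
    _ = e y + lam ^ (-p) * ((1 / (p + 1)) * ‖yk - Pyk‖ ^ (p + 1))
          + p ^ p * (lam ^ (-p) * ((1 / (p + 1)) * ‖y - yk‖ ^ (p + 1))) := by
        rw [hd]; ring
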